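/- Let f : R^n → R be C^1 with L-Lipschitz gradient, and let the polling set D_k at iterate x_k be a Λ-PSS for B(x_k, α_k) with ‖d‖ ≤ d_max·α_k for all d ∈ D_k. If ∇f(x_k) ≠ 0 and α_k < 2‖∇f(x_k)‖ / ((L·d_max² + σ)·Λ), then there exists d ∈ D_k with f(x_k + d) < f(x_k) − (σ/2)·α_k². -/

import Mathlib

open RealInnerProductSpace

/-- The descent lemma: if `f` is `C¹` with `L`-Lipschitz gradient, then
`f (x + d) ≤ f x + ⟪∇f x, d⟫ + L/2 ‖d‖²`. -/
lemma descent_lemma_aux {n : ℕ} (f : EuclideanSpace ℝ (Fin n) → ℝ) (L : ℝ)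
    (hf : ContDiff ℝ 1 f)
    (hlip : ∀ y z : EuclideanSpace ℝ (Fin n),
      ‖gradient f y - gradient f z‖ ≤ L * ‖y - z‖)
    (x v : EuclideanSpace ℝ (Fin n)) :
    f (x + v) ≤ f x + ⟪gradient f x, v⟫ + L / 2 * ‖v‖ ^ 2 := by
  have hdiff : ∀ y, DifferentiableAt ℝ f y := fun y =>
    (hf.differentiable one_ne_zero).differentiableAt
  -- derivative of the curve
  have hφ' : ∀ t : ℝ, HasDerivAt (fun t : ℝ => f (x + t • v))
      (⟪gradient f (x + t • v), v⟫) t := by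
    intro t
    have hc : HasDerivAt (fun t : ℝ => x + t • v) v t := by
      simpa using ((hasDerivAt_id t).smul_const v).const_add x
    have hfd : HasFDerivAt f
        (InnerProductSpace.toDual ℝ _ (gradient f (x + t • v))) (x + t • v) :=
      (hdiff _).hasGradientAt.hasFDerivAt
    have h := hfd.comp_hasDerivAt t hc
    rw [InnerProductSpace.toDual_apply_apply] at h
    exact h
  set g := gradient f x with hg
  set ψ : ℝ → ℝ := fun t => f (x + t • v) - t * ⟪g, v⟫ - L / 2 * ‖v‖ ^ 2 * t ^ 2
    with hψ
  have hψ' : ∀ t : ℝ, HasDerivAt ψ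
      (⟪gradient f (x + t • v), v⟫ - ⟪g, v⟫ - L * ‖v‖ ^ 2 * t) t := by
    intro t
    have h1 : HasDerivAt (fun t : ℝ => t * ⟪g, v⟫) (⟪g, v⟫) t := by
      simpa using (hasDerivAt_id t).mul_const (⟪g, v⟫)
    have h2 : HasDerivAt (fun t : ℝ => L / 2 * ‖v‖ ^ 2 * t ^ 2)
        (L / 2 * ‖v‖ ^ 2 * (2 * t)) t := by
      have := (hasDerivAt_pow 2 t).const_mul (L / 2 * ‖v‖ ^ 2)
      simpa [mul_comm, mul_assoc, mul_left_comm] using this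
    have := ((hφ' t).sub h1).sub h2
    exact this.congr_deriv (by ring)
  have hanti : AntitoneOn ψ (Set.Icc (0 : ℝ) 1) := by
    apply antitoneOn_of_deriv_nonpos (convex_Icc 0 1)
    · exact fun t _ => ((hψ' t).continuousAt).continuousWithinAt
    · exact fun t _ => ((hψ' t).differentiableAt).differentiableWithinAt
    · intro t ht
      rw [interior_Icc] at ht
      rw [(hψ' t).deriv]
      have key : ⟪gradient f (x + t • v) - g, v⟫ ≤ L * ‖v‖ ^ 2 * t := by
        calc ⟪gradient f (x + t • v) - g, v⟫
            ≤ ‖gradient f (x + t • v) - g‖ * ‖v‖ := real_inner_le_norm _ _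
          _ ≤ L * ‖(x + t • v) - x‖ * ‖v‖ := by
              have := hlip (x + t • v) x
              exact mul_le_mul_of_nonneg_right this (norm_nonneg _)
          _ = L * ‖v‖ ^ 2 * t := by
              have : ‖(x + t • v) - x‖ = t * ‖v‖ := by
                simp [norm_smul, abs_of_pos ht.1]
              rw [this]; ring
      have := inner_sub_left (𝕜 := ℝ) (gradient f (x + t • v)) g v
      linarith [key, this.symm ▸ key]
  have := hanti (Set.left_mem_Icc.2 zero_le_one) (Set.right_mem_Icc.2 zero_le_one)
    zero_le_one
  simp only [hψ, zero_smul, add_zero, zero_mul, one_smul, one_mul, mul_zero,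
    sub_zero, one_pow, mul_one] at this
  linarith

/-- Success of a polling step on a Λ-PSS in the unconstrained case: if f is C¹ with
L-Lipschitz gradient, D is a Λ-PSS for B(x,α) with ‖d‖ ≤ d_max·α, ∇f(x) ≠ 0 and
α < 2‖∇f(x)‖/((L d_max² + σ)Λ), then some poll point achieves sufficient decrease. -/
theorem lambda_pss_success_unconstrained (n p : ℕ)
    (f : EuclideanSpace ℝ (Fin n) → ℝ) (L σ Λ dmax α : ℝ)
    (hL : 0 < L) (hσ : 0 < σ) (hΛ : 0 < Λ) (hdmax : 0 < dmax) (hα : 0 < α)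
    (hf : ContDiff ℝ 1 f)
    (hlip : ∀ y z : EuclideanSpace ℝ (Fin n),
      ‖gradient f y - gradient f z‖ ≤ L * ‖y - z‖)
    (x : EuclideanSpace ℝ (Fin n)) (d : Fin p → EuclideanSpace ℝ (Fin n))
    (hPSS : ∀ v : EuclideanSpace ℝ (Fin n), ‖v‖ ≤ α →
      ∃ c : Fin p → ℝ, (∀ i, 0 ≤ c i) ∧ v = ∑ i, c i • d i ∧ ∑ i, c i ≤ Λ)
    (hnorm : ∀ i, ‖d i‖ ≤ dmax * α)
    (hgrad : gradient f x ≠ 0)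
    (hsmall : α < 2 * ‖gradient f x‖ / ((L * dmax ^ 2 + σ) * Λ)) :
    ∃ i, f (x + d i) < f x - σ / 2 * α ^ 2 := by
  set g := gradient f x with hg
  have hgnorm : 0 < ‖g‖ := norm_pos_iff.2 hgrad
  set v : EuclideanSpace ℝ (Fin n) := -(α / ‖g‖) • g with hv
  have hvnorm : ‖v‖ = α := by
    rw [hv, norm_smul]
    rw [norm_neg, Real.norm_eq_abs, abs_of_pos (div_pos hα hgnorm)]
    field_simp
  obtain ⟨c, hc0, hvsum, hcΛ⟩ := hPSS v hvnorm.le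
  -- ⟪g, v⟫ = -α ‖g‖
  have hinner_v : ⟪g, v⟫ = -(α * ‖g‖) := by
    rw [hv, inner_smul_right, real_inner_self_eq_norm_sq]
    field_simp
  have hinner_sum : ⟪g, v⟫ = ∑ i, c i * ⟪g, d i⟫ := by
    rw [hvsum, inner_sum]
    congr 1; ext i; rw [real_inner_smul_right]
  -- some direction has sufficiently negative inner product with g
  have hexists : ∃ i, ⟪g, d i⟫ ≤ -(α * ‖g‖ / Λ) := by
    by_contra hcon
    push_neg at hcon
    have hvne : v ≠ 0 := by
      intro h; rw [h, norm_zero] at hvnorm; linarith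
    obtain ⟨j, hj⟩ : ∃ j, c j ≠ 0 := by
      by_contra hall
      push_neg at hall
      apply hvne
      rw [hvsum]
      exact Finset.sum_eq_zero fun i _ => by rw [hall i, zero_smul]
    have hcj : 0 < c j := lt_of_le_of_ne (hc0 j) (Ne.symm hj)
    have hstrict : ∑ i, c i * (-(α * ‖g‖ / Λ)) < ∑ i, c i * ⟪g, d i⟫ := by
      apply Finset.sum_lt_sum
      · intro i _
        exact mul_le_mul_of_nonneg_left (hcon i).le (hc0 i)
      · exact ⟨j, Finset.mem_univ j, by
          exact mul_lt_mul_of_pos_left (hcon j) hcj⟩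
    have hsum_lb : -(α * ‖g‖) ≤ ∑ i, c i * (-(α * ‖g‖ / Λ)) := by
      rw [← Finset.sum_mul]
      have hK : -(α * ‖g‖ / Λ) ≤ 0 := by
        have : 0 ≤ α * ‖g‖ / Λ := by positivity
        linarith
      have h1 : (∑ i, c i) * (-(α * ‖g‖ / Λ)) ≥ Λ * (-(α * ‖g‖ / Λ)) :=
        mul_le_mul_of_nonpos_right hcΛ hK
      have h2 : Λ * (-(α * ‖g‖ / Λ)) = -(α * ‖g‖) := by
        field_simp
      linarith
    rw [hinner_v] at hinner_sum
    linarith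
  obtain ⟨i, hi⟩ := hexists
  refine ⟨i, ?_⟩
  have hdesc := descent_lemma_aux f L hf hlip x (d i)
  have hd2 : ‖d i‖ ^ 2 ≤ (dmax * α) ^ 2 := by
    have := hnorm i
    nlinarith [norm_nonneg (d i)]
  -- key smallness inequality
  have hden : 0 < (L * dmax ^ 2 + σ) * Λ := by positivity
  have hsmall' : α * ((L * dmax ^ 2 + σ) * Λ) < 2 * ‖g‖ :=
    (lt_div_iff₀ hden).mp hsmall
  have hkey : L / 2 * (dmax * α) ^ 2 - α * ‖g‖ / Λ < -(σ / 2 * α ^ 2) := by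
    have hid : α * ‖g‖ / Λ * Λ = α * ‖g‖ := by field_simp
    nlinarith [hid, mul_lt_mul_of_pos_left hsmall' hα, hΛ, hα]
  have hLpos : L / 2 * ‖d i‖ ^ 2 ≤ L / 2 * (dmax * α) ^ 2 := by
    apply mul_le_mul_of_nonneg_left hd2; positivity
  calc f (x + d i) ≤ f x + ⟪g, d i⟫ + L / 2 * ‖d i‖ ^ 2 := hdesc
    _ ≤ f x + (-(α * ‖g‖ / Λ)) + L / 2 * (dmax * α) ^ 2 := by linarith
    _ < f x - σ / 2 * α ^ 2 := by linarith
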